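/- arXiv:1611.08326 — 2 statements merged into one kernel-verified Lean document; each statement's English description precedes it below -/
import Mathlib

section
/- In any undirected graph G, if a subset S 'contains all or none of each twin class' property fails for a set of k ≥ 2 pairwise non-adjacent mutually-twin vertices (identical neighborhoods outside the class), then S is not a (1, β)-community for any β < (|S|−1)/|S|. Equivalently: a (1, β)-community with β < 1 − 1/|S| either contains all k twins or none of them; and since the twins are pairwise non-adjacent, it must contain none (when k ≥ 2). -/
/-- Let `T` be a class of `k ≥ 2` pairwise non-adjacent twin vertices
(identical neighborhoods outside `T`).  Any `(1, β)`-community `S` with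
`β < 1 − 1/|S|` contains all of the twins or none of them — and, since the twins are
pairwise non-adjacent, it must in fact contain none of them. -/
theorem twin_class_excluded_from_community {V : Type} [Fintype V] [DecidableEq V]
    (G : SimpleGraph V) [DecidableRel G.Adj] (T : Finset V) (hT : 2 ≤ T.card)
    (hindep : ∀ u ∈ T, ∀ u' ∈ T, ¬ G.Adj u u')
    (htwin : ∀ u ∈ T, ∀ u' ∈ T, ∀ w : V, w ∉ T → (G.Adj u w ↔ G.Adj u' w))
    (S : Finset V) (β : ℝ) (hβ : β < 1 - 1 / (S.card : ℝ))
    (hstrong : ∀ v ∈ S, ∀ w ∈ S, v ≠ w → G.Adj v w)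
    (hweak : ∀ u ∉ S, ((S.filter (fun w => G.Adj u w)).card : ℝ) ≤ β * S.card) :
    ((∀ u ∈ T, u ∈ S) ∨ (∀ u ∈ T, u ∉ S)) ∧ (∀ u ∈ T, u ∉ S) := by
  have hnone : ∀ u ∈ T, u ∉ S := by
    intro u hu huS
    -- get a second twin u' ≠ u
    obtain ⟨u', hu', hne⟩ := Finset.exists_mem_ne (s := T) (by omega) u
    -- u' ∉ S
    have hu'S : u' ∉ S := by
      intro hu'S
      exact hindep u' hu' u hu (hstrong u' hu'S u huS hne)
    -- S.erase u ⊆ neighbors of u' in S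
    have hsub : S.erase u ⊆ S.filter (fun w => G.Adj u' w) := by
      intro w hw
      have hwS : w ∈ S := Finset.mem_of_mem_erase hw
      have hwu : w ≠ u := Finset.ne_of_mem_erase hw
      have hadj : G.Adj u w := hstrong u huS w hwS (Ne.symm hwu)
      have hwT : w ∉ T := fun hwT => hindep u hu w hwT hadj
      exact Finset.mem_filter.mpr ⟨hwS, (htwin u hu u' hu' w hwT).mp hadj⟩
    have hcard : (S.card : ℝ) - 1 ≤ ((S.filter (fun w => G.Adj u' w)).card : ℝ) := by
      have h1 : S.card - 1 ≤ (S.filter (fun w => G.Adj u' w)).card := by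
        calc S.card - 1 = (S.erase u).card := (Finset.card_erase_of_mem huS).symm
        _ ≤ _ := Finset.card_le_card hsub
      have h2 : 1 ≤ S.card := Finset.card_pos.mpr ⟨u, huS⟩
      have h1' : ((S.card - 1 : ℕ) : ℝ) ≤ ((S.filter (fun w => G.Adj u' w)).card : ℝ) :=
        Nat.cast_le.mpr h1
      rw [Nat.cast_sub h2] at h1'
      simpa using h1'
    have hSpos : (0 : ℝ) < S.card := by
      exact_mod_cast Finset.card_pos.mpr ⟨u, huS⟩
    have hmul : β * S.card < (1 - 1 / (S.card : ℝ)) * S.card :=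
      mul_lt_mul_of_pos_right hβ hSpos
    have : (1 - 1 / (S.card : ℝ)) * S.card = (S.card : ℝ) - 1 := by
      field_simp
    have := hweak u' hu'S
    linarith
  exact ⟨Or.inr hnone, hnone⟩
end

section
/- Consider the communities graph from the counting reduction: vertices are tuples (g, p₁, p₂, i) with g ∈ G (a finite field), p₁, p₂ degree-(|F|−1) polynomials over G with p₁(g) = p₂(g), and i ∈ [1/ε]; two vertices are adjacent iff their induced partial assignments agree on the intersections of their lines and violate no Label Cover constraint; additionally, for each g and i there are two identical non-adjacent auxiliary vertices u_{g,i} adjacent to every proper vertex (g', p₁, p₂, i) with g' ≠ g. Then no (1, ε)-community C in this graph contains any auxiliary vertex. -/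
open scoped Classical

/-- The partial assignment (on the row `G × {g}` and column `{g} × G`) induced by the data
`(g, p₁, p₂)`: the point `(h, g)` gets the value `p₁(h)` and the point `(g, h)` gets the
value `p₂(h)`. -/
def lineAssign {𝔽 : Type} [CommSemiring 𝔽] [DecidableEq 𝔽]
    (g : 𝔽) (p₁ p₂ : Polynomial 𝔽) (z : 𝔽 × 𝔽) : Option 𝔽 :=
  if z.2 = g then some (Polynomial.eval z.1 p₁)
  else if z.1 = g then some (Polynomial.eval z.2 p₂)
  else none

/-- A proper vertex of the communities graph: a line index `g`, two polynomials of degree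
at most `d` assigning values to the row and column of `g` and agreeing at `(g, g)`,
and a copy index `i ∈ [k]` (with `k = 1/ε`). -/
structure ProperData (𝔽 : Type) [CommSemiring 𝔽] (d k : ℕ) where
  g : 𝔽
  p₁ : Polynomial 𝔽
  p₂ : Polynomial 𝔽
  i : Fin k
  hdeg₁ : p₁.natDegree ≤ d
  hdeg₂ : p₂.natDegree ≤ d
  hmeet : Polynomial.eval g p₁ = Polynomial.eval g p₂

/-- Vertices: proper vertices, plus auxiliary vertices `u_{g,i}` (two identical copies
each, indexed by a `Bool`). -/
abbrev Vtx (𝔽 : Type) [CommSemiring 𝔽] (d k : ℕ) : Type :=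
  ProperData 𝔽 d k ⊕ (𝔽 × Fin k × Bool)

/-- The partial assignment induced by a proper vertex. -/
def assignOf {𝔽 : Type} [CommSemiring 𝔽] [DecidableEq 𝔽] {d k : ℕ}
    (v : ProperData 𝔽 d k) : 𝔽 × 𝔽 → Option 𝔽 :=
  lineAssign v.g v.p₁ v.p₂

/-- Two proper vertices agree on the intersection of their lines. -/
def Agree {𝔽 : Type} [CommSemiring 𝔽] [DecidableEq 𝔽] {d k : ℕ}
    (v w : ProperData 𝔽 d k) : Prop :=
  ∀ (z : 𝔽 × 𝔽) (a b : 𝔽), assignOf v z = some a → assignOf w z = some b → a = b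

/-- Adjacency in the communities graph.  Two proper vertices are adjacent iff they agree
on the intersection of their lines and their induced assignments violate no Label Cover
constraint (the latter abstracted by the relation `ok`).  The auxiliary vertex `u_{g,i}`
is adjacent exactly to the proper vertices `v_{g',p₁,p₂,i}` with `g' ≠ g`; the copies of
auxiliary vertices are pairwise non-adjacent. -/
def Adj {𝔽 : Type} [CommSemiring 𝔽] [DecidableEq 𝔽] {d k : ℕ}
    (ok : (𝔽 × 𝔽 → Option 𝔽) → (𝔽 × 𝔽 → Option 𝔽) → Prop) :
    Vtx 𝔽 d k → Vtx 𝔽 d k → Prop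
  | Sum.inl v, Sum.inl w => v ≠ w ∧ Agree v w ∧ ok (assignOf v) (assignOf w)
  | Sum.inl v, Sum.inr u => v.g ≠ u.1 ∧ v.i = u.2.1
  | Sum.inr u, Sum.inl v => v.g ≠ u.1 ∧ v.i = u.2.1
  | Sum.inr _, Sum.inr _ => False

/-- A `(1, β)`-community: a finite nonempty set of vertices, every member adjacent to
every other member, and every non-member adjacent to at most a `β`-fraction of the
members. -/
def IsCommunity {𝔽 : Type} [CommSemiring 𝔽] [DecidableEq 𝔽] {d k : ℕ}
    (ok : (𝔽 × 𝔽 → Option 𝔽) → (𝔽 × 𝔽 → Option 𝔽) → Prop)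
    (β : ℝ) (C : Set (Vtx 𝔽 d k)) : Prop :=
  C.Finite ∧ C.Nonempty ∧
  (∀ v ∈ C, ∀ w ∈ C, v ≠ w → Adj ok v w) ∧
  (∀ u ∉ C, ({w ∈ C | Adj ok u w}.ncard : ℝ) ≤ β * C.ncard)

/-- In the communities graph of the counting reduction, no
`(1, ε)`-community contains any auxiliary vertex. -/
theorem no_auxiliary_vertices_in_community {𝔽 : Type} [Field 𝔽] [Fintype 𝔽]
    [DecidableEq 𝔽] (F : Finset 𝔽) (k : ℕ) (hk : 3 ≤ k)
    (hcard : 2 ≤ Fintype.card 𝔽) (ε : ℝ) (hε : ε = 1 / (k : ℝ))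
    (ok : (𝔽 × 𝔽 → Option 𝔽) → (𝔽 × 𝔽 → Option 𝔽) → Prop)
    (hsym : ∀ f g, ok f g ↔ ok g f)
    (C : Set (Vtx 𝔽 (F.card - 1) k)) (hC : IsCommunity ok ε C) :
    ∀ u : 𝔽 × Fin k × Bool, Sum.inr u ∉ C := by
  intro u hu
  obtain ⟨hfin, hne, hclique, hsparse⟩ := hC
  -- the twin copy of u
  set u' : Vtx 𝔽 (F.card - 1) k := Sum.inr (u.1, u.2.1, !u.2.2) with hu'def
  have huu' : u' ≠ Sum.inr u := by
    simp only [hu'def, ne_eq, Sum.inr.injEq, Prod.ext_iff]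
    rintro ⟨-, -, h⟩
    exact (Bool.not_ne_self u.2.2) h
  have hu'notin : u' ∉ C := by
    intro h
    exact hclique _ h _ hu huu'
  -- the neighbors of u' in C are exactly C \ {inr u}
  have hS : {w ∈ C | Adj ok u' w} = C \ {Sum.inr u} := by
    ext w
    constructor
    · rintro ⟨hwC, hadj⟩
      refine ⟨hwC, ?_⟩
      intro hw
      simp only [Set.mem_singleton_iff] at hw
      subst hw
      exact hadj
    · rintro ⟨hwC, hwne⟩
      simp only [Set.mem_singleton_iff] at hwne
      refine ⟨hwC, ?_⟩
      match w with
      | Sum.inl v =>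
        have h1 : Adj ok (Sum.inr u) (Sum.inl v) :=
          hclique _ hu _ hwC (by simp)
        exact h1
      | Sum.inr u2 =>
        exact absurd (hclique _ hu _ hwC (fun h => hwne h.symm)) id
  have hncd : (C \ {Sum.inr u}).ncard = C.ncard - 1 :=
    Set.ncard_diff_singleton_of_mem hu
  have hn1 : 1 ≤ C.ncard := (Set.ncard_pos hfin).mpr hne
  have hbound := hsparse u' hu'notin
  rw [hS, hncd] at hbound
  have hcast : ((C.ncard - 1 : ℕ) : ℝ) = (C.ncard : ℝ) - 1 := by
    push_cast [Nat.cast_sub hn1]; ring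
  rw [hcast] at hbound
  have hk3 : (3 : ℝ) ≤ (k : ℝ) := by exact_mod_cast hk
  have hkpos : (0 : ℝ) < (k : ℝ) := by linarith
  have hε3 : ε ≤ 1 / 3 := by
    rw [hε]
    exact one_div_le_one_div_of_le (by norm_num) hk3
  have hεpos : 0 < ε := by rw [hε]; positivity
  by_cases h2 : 2 ≤ C.ncard
  · -- |C| ≥ 2 : contradiction from |C| - 1 ≤ ε |C|
    have hn2 : (2 : ℝ) ≤ (C.ncard : ℝ) := by exact_mod_cast h2
    have : ε * (C.ncard : ℝ) ≤ (1 / 3) * (C.ncard : ℝ) :=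
      mul_le_mul_of_nonneg_right hε3 (by positivity)
    linarith
  · -- |C| = 1, so C = {inr u}; a proper neighbor of u contradicts sparsity
    have hn : C.ncard = 1 := by omega
    obtain ⟨a, ha⟩ := Set.ncard_eq_one.mp hn
    have hau : a = Sum.inr u := by
      have := hu; rw [ha] at this; exact this.symm
    subst hau
    obtain ⟨g', hg'⟩ := Fintype.exists_ne_of_one_lt_card (by omega) u.1
    set v : ProperData 𝔽 (F.card - 1) k :=
      ⟨g', 0, 0, u.2.1, by simp, by simp, rfl⟩ with hv
    have hvnot : (Sum.inl v : Vtx 𝔽 (F.card - 1) k) ∉ C := by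
      rw [ha]; simp
    have hb := hsparse (Sum.inl v) hvnot
    have hSv : {w ∈ C | Adj ok (Sum.inl v) w} = {Sum.inr u} := by
      rw [ha]
      ext w
      simp only [Set.mem_setOf_eq, Set.mem_singleton_iff]
      constructor
      · rintro ⟨h, -⟩; exact h
      · rintro rfl
        exact ⟨rfl, ⟨hg', rfl⟩⟩
    rw [hSv, hn] at hb
    simp only [Set.ncard_singleton, Nat.cast_one, mul_one] at hb
    linarith
end
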